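/- Fix an integer k ≥ 1 and points z₁,…,z_k ∈ ℂ with 0 < |z_l| < 1 for all l, and set x₀ = Π_{l=1}^k |z_l|². Let Q_j be the coefficient of s^j in det[ s/(1 − z_i \bar{z}_j) + z_i \bar{z}_j/(1 − z_i \bar{z}_j)² ]_{i,j=1}^k, and for t > 0 define F_0^{(t)}(x) = x^{−1} e^{−t/x} on (0,∞) and F_{l+1}^{(t)}(x) = d/dx [ x·F_l^{(t)}(x) ]. Then: (i) Q_0 = x₀ · det[ 1/(1 − z_i \bar{z}_j)² ]_{i,j=1}^k; and (ii) lim_{t→0⁺} e^{t} Σ_{l=0}^k Q_l · F_l^{(t)}(x₀) = det[ 1/(1 − z_i \bar{z}_j)² ]_{i,j=1}^k. -/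

import Mathlib

open Matrix Polynomial ComplexConjugate Filter

/-- The operator `f ↦ d/dx (x·f(x))`, iterated. -/
noncomputable def iterD (f : ℝ → ℝ) : ℕ → ℝ → ℝ
  | 0 => f
  | (l + 1) => deriv (fun x => x * iterD f l x)

/-- The coefficient of `s^j` in the polynomial (in `s`)
`det [ s·g(z_i z̄_{i'}) + h(z_i z̄_{i'}) ]_{i,i'=1}^k`. -/
noncomputable def coefDet {k : ℕ} (g h : ℂ → ℂ) (z : Fin k → ℂ) (j : ℕ) : ℂ :=
  (Matrix.det (Matrix.of fun i i' : Fin k =>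
    Polynomial.C (g (z i * conj (z i'))) * Polynomial.X
      + Polynomial.C (h (z i * conj (z i'))))).coeff j

/-- Bivariate polynomial (outer variable `u = 1/x`, coefficient ring `ℝ[t]`)
recording the iterates `iterD` of `x ↦ x⁻¹ e^{-t/x}`. -/
noncomputable def Qpoly : ℕ → Polynomial (Polynomial ℝ)
  | 0 => Polynomial.X
  | (l + 1) => (1 + Polynomial.C Polynomial.X * Polynomial.X) * Qpoly l
      - Polynomial.X * Polynomial.derivative (Qpoly l)

lemma iterD_eq (t : ℝ) : ∀ (l : ℕ) {x : ℝ}, 0 < x →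
    iterD (fun x => x⁻¹ * Real.exp (-t / x)) l x
      = Real.exp (-t / x) * ((Qpoly l).map (Polynomial.evalRingHom t)).eval x⁻¹
  | 0, x, hx => by simp [iterD, Qpoly, mul_comm]
  | (l + 1), x, hx => by
    have hx' : x ≠ 0 := ne_of_gt hx
    set P := (Qpoly l).map (Polynomial.evalRingHom t) with hPdef
    have hev : (fun y => y * iterD (fun x => x⁻¹ * Real.exp (-t / x)) l y)
        =ᶠ[nhds x] fun y => y * (Real.exp (-t / y) * P.eval y⁻¹) := by
      filter_upwards [isOpen_Ioi.mem_nhds hx] with y hy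
      rw [iterD_eq t l hy]
    show deriv (fun y => y * iterD (fun x => x⁻¹ * Real.exp (-t / x)) l y) x = _
    rw [hev.deriv_eq]
    have hinv : HasDerivAt (fun y : ℝ => y⁻¹) (-(x ^ 2)⁻¹) x := hasDerivAt_inv hx'
    have hdiv : HasDerivAt (fun y : ℝ => -t / y) (-t * -(x ^ 2)⁻¹) x := by
      simpa [div_eq_mul_inv] using hinv.const_mul (-t)
    have hexp : HasDerivAt (fun y : ℝ => Real.exp (-t / y))
        (Real.exp (-t / x) * (-t * -(x ^ 2)⁻¹)) x := hdiv.exp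
    have hPd : HasDerivAt (fun y : ℝ => P.eval y⁻¹)
        (P.derivative.eval x⁻¹ * -(x ^ 2)⁻¹) x := (P.hasDerivAt x⁻¹).comp x hinv
    have htot := (hasDerivAt_id' (𝕜 := ℝ) x).mul (hexp.mul hPd)
    rw [(show HasDerivAt (fun y => y * (Real.exp (-t / y) * P.eval y⁻¹)) _ x from htot).deriv]
    have hder : ((Qpoly (l + 1)).map (Polynomial.evalRingHom t))
        = (1 + Polynomial.C t * Polynomial.X) * P
          - Polynomial.X * Polynomial.derivative P := by
      simp [Qpoly, Polynomial.derivative_map, hPdef]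
    rw [hder]
    simp only [Polynomial.eval_sub, Polynomial.eval_mul, Polynomial.eval_add,
      Polynomial.eval_one, Polynomial.eval_C, Polynomial.eval_X, Pi.mul_apply]
    field_simp
    ring

lemma Qpoly_map_zero : ∀ l : ℕ, 1 ≤ l →
    (Qpoly l).map (Polynomial.evalRingHom (0 : ℝ)) = 0 := by
  have key : ∀ l : ℕ, (Qpoly (l + 1)).map (Polynomial.evalRingHom (0 : ℝ))
      = (Qpoly l).map (Polynomial.evalRingHom (0 : ℝ))
        - Polynomial.X * Polynomial.derivative
            ((Qpoly l).map (Polynomial.evalRingHom (0 : ℝ))) := by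
    intro l
    simp [Qpoly, Polynomial.derivative_map]
  intro l hl
  induction l with
  | zero => omega
  | succ n ih =>
    rcases Nat.eq_or_lt_of_le hl with h | h
    · have hn : n = 0 := by omega
      subst hn
      simp [key, Qpoly]
    · have := ih (by omega)
      rw [key, this]
      simp

lemma eval_map_eval (P : Polynomial (Polynomial ℝ)) (t u : ℝ) :
    (P.map (Polynomial.evalRingHom t)).eval u
      = (P.eval (Polynomial.C u)).eval t := by
  induction P using Polynomial.induction_on' with
  | add p q hp hq => simp [hp, hq]
  | monomial n a => simp [Polynomial.eval_monomial, mul_comm]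

/-- (i) `Q₀ = x₀ · det[1/(1 − z_i z̄_j)²]`; (ii) as `t → 0⁺` the limiting
`k`-point correlation `e^t Σ_{l=0}^k Q_l F_l^{(t)}(x₀)` reduces to the
determinantal form `det[1/(1 − z_i z̄_j)²]`. -/
theorem stmt7 (k : ℕ) (hk : 1 ≤ k) (z : Fin k → ℂ)
    (hz : ∀ l, 0 < ‖z l‖ ∧ ‖z l‖ < 1) :
    coefDet (fun x => (1 - x)⁻¹) (fun x => x / (1 - x) ^ 2) z 0
      = ((∏ l', ‖z l'‖ ^ 2 : ℝ) : ℂ) *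
          Matrix.det (Matrix.of fun i i' : Fin k => ((1 - z i * conj (z i')) ^ 2)⁻¹) ∧
    Tendsto (fun t : ℝ =>
        (Real.exp t : ℂ) *
          ∑ l ∈ Finset.range (k + 1),
            coefDet (fun x => (1 - x)⁻¹) (fun x => x / (1 - x) ^ 2) z l *
              ((iterD (fun x => x⁻¹ * Real.exp (-t / x)) l
                  (∏ l', ‖z l'‖ ^ 2) : ℝ) : ℂ))
      (nhdsWithin 0 (Set.Ioi 0))
      (nhds (Matrix.det (Matrix.of fun i i' : Fin k => ((1 - z i * conj (z i')) ^ 2)⁻¹))) := by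
  set x₀ : ℝ := ∏ l', ‖z l'‖ ^ 2 with hx₀def
  have hx₀pos : 0 < x₀ := by
    apply Finset.prod_pos
    intro l _
    exact pow_pos (hz l).1 2
  have hx₀ : x₀ ≠ 0 := ne_of_gt hx₀pos
  set D : ℂ := Matrix.det (Matrix.of fun i i' : Fin k => ((1 - z i * conj (z i')) ^ 2)⁻¹)
    with hDdef
  -- Part (i)
  have hpart1 : coefDet (fun x => (1 - x)⁻¹) (fun x => x / (1 - x) ^ 2) z 0
      = (x₀ : ℂ) * D := by
    unfold coefDet
    rw [Polynomial.coeff_zero_eq_eval_zero]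
    have hdet := RingHom.map_det (Polynomial.evalRingHom (0 : ℂ))
      (Matrix.of fun i i' : Fin k =>
        Polynomial.C ((1 - z i * conj (z i'))⁻¹) * Polynomial.X
          + Polynomial.C ((z i * conj (z i')) / (1 - z i * conj (z i')) ^ 2))
    have heval : (Matrix.of fun i i' : Fin k =>
        Polynomial.C ((1 - z i * conj (z i'))⁻¹) * Polynomial.X
          + Polynomial.C ((z i * conj (z i')) / (1 - z i * conj (z i')) ^ 2)).map
        (Polynomial.evalRingHom (0 : ℂ))
        = Matrix.of (fun i i' : Fin k =>
            z i * (conj (z i') * ((1 - z i * conj (z i')) ^ 2)⁻¹)) := by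
      ext i i'
      simp [Matrix.map_apply, div_eq_mul_inv, mul_assoc]
    have : Polynomial.eval (0 : ℂ) = ⇑(Polynomial.evalRingHom (0 : ℂ)) := rfl
    rw [RingHom.mapMatrix_apply] at hdet
    have h2 : Matrix.det (Matrix.of fun i i' : Fin k =>
        z i * (conj (z i') * ((1 - z i * conj (z i')) ^ 2)⁻¹))
          = (∏ i, z i) * ((∏ i, conj (z i)) * D) := by
      have hmc := Matrix.det_mul_column z
        (Matrix.of fun i i' : Fin k => conj (z i') * ((1 - z i * conj (z i')) ^ 2)⁻¹)
      simp only [Matrix.of_apply] at hmc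
      rw [hmc]
      congr 1
      rw [hDdef]
      exact Matrix.det_mul_row (fun i => conj (z i)) _
    rw [this, hdet, heval, h2]
    have hprod : (∏ i, z i) * ((∏ i, conj (z i)) * D) = (x₀ : ℂ) * D := by
      rw [← mul_assoc, ← Finset.prod_mul_distrib]
      congr 1
      rw [hx₀def]
      push_cast
      refine Finset.prod_congr rfl fun l _ => ?_
      rw [Complex.mul_conj, ← Complex.sq_norm]
      push_cast
      ring
    exact hprod
  refine ⟨hpart1, ?_⟩
  -- Part (ii)
  set Qc : ℕ → ℂ := fun l => coefDet (fun x => (1 - x)⁻¹) (fun x => x / (1 - x) ^ 2) z l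
    with hQcdef
  set E : ℝ → ℂ := fun t =>
    (Real.exp t : ℂ) * ∑ l ∈ Finset.range (k + 1),
      Qc l * ((Real.exp (-t / x₀) * ((Qpoly l).eval (Polynomial.C x₀⁻¹)).eval t : ℝ) : ℂ)
    with hEdef
  have hEeq : ∀ t : ℝ,
      (Real.exp t : ℂ) * ∑ l ∈ Finset.range (k + 1),
        Qc l * ((iterD (fun x => x⁻¹ * Real.exp (-t / x)) l x₀ : ℝ) : ℂ) = E t := by
    intro t
    rw [hEdef]
    congr 1
    refine Finset.sum_congr rfl fun l _ => ?_
    rw [iterD_eq t l hx₀pos, eval_map_eval]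
  have hEcont : Continuous E := by
    apply Continuous.mul
    · exact Complex.continuous_ofReal.comp Real.continuous_exp
    · apply continuous_finset_sum
      intro l _
      apply Continuous.mul continuous_const
      apply Complex.continuous_ofReal.comp
      apply Continuous.mul
      · exact Real.continuous_exp.comp (by fun_prop)
      · exact ((Qpoly l).eval (Polynomial.C x₀⁻¹)).continuous
  have hE0 : E 0 = D := by
    rw [hEdef]
    simp only
    have hsum : (∑ l ∈ Finset.range (k + 1),
        Qc l * ((Real.exp (-(0:ℝ) / x₀) *
            ((Qpoly l).eval (Polynomial.C x₀⁻¹)).eval 0 : ℝ) : ℂ))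
          = Qc 0 * ((x₀⁻¹ : ℝ) : ℂ) := by
      rw [Finset.sum_eq_single_of_mem 0 (Finset.mem_range.mpr (Nat.succ_pos k))]
      · have hev0 : ((Qpoly 0).eval (Polynomial.C x₀⁻¹)).eval (0:ℝ)
            = ((Qpoly 0).map (Polynomial.evalRingHom (0 : ℝ))).eval x₀⁻¹ :=
          (eval_map_eval _ _ _).symm
        rw [hev0]
        simp [Qpoly]
      · intro l _ hl
        have hev0 : ((Qpoly l).eval (Polynomial.C x₀⁻¹)).eval (0:ℝ)
            = ((Qpoly l).map (Polynomial.evalRingHom (0 : ℝ))).eval x₀⁻¹ :=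
          (eval_map_eval _ _ _).symm
        rw [hev0, Qpoly_map_zero l (Nat.one_le_iff_ne_zero.mpr hl)]
        simp
    rw [hsum]
    have hQc0 : Qc 0 = (x₀ : ℂ) * D := hpart1
    rw [hQc0, Real.exp_zero, Complex.ofReal_one, one_mul, Complex.ofReal_inv]
    have hx₀c : (x₀ : ℂ) ≠ 0 := Complex.ofReal_ne_zero.mpr hx₀
    field_simp
  have : Tendsto E (nhdsWithin 0 (Set.Ioi 0)) (nhds D) := by
    rw [← hE0]
    exact (hEcont.tendsto 0).mono_left nhdsWithin_le_nhds
  exact Tendsto.congr (fun t => (hEeq t).symm) this
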